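/- Let P be an m-point homogeneous polytope in R^n (m ≥ 1) such that the prism P̃ = P × [0,c] is rigidly two-layered (c² ∉ D(P)). Then P̃ is an m-point homogeneous polytope in R^{n+1}. -/

import Mathlib

/-- A subset `M` of a metric space is `m`-point homogeneous if every distance-preserving
correspondence between two `m`-tuples of points of `M` is realized by an isometry of `M`. -/
def mPointHomogeneous {X : Type*} [MetricSpace X] (M : Set X) (m : ℕ) : Prop :=
  ∀ A B : Fin m → ↥M, (∀ i j, dist (A i) (A j) = dist (B i) (B j)) →
    ∃ e : ↥M ≃ᵢ ↥M, ∀ i, e (A i) = B i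

/-- The vertex set of the prism `P × [0,c]` in `ℝⁿ × ℝ` (with the `L²` product metric),
where `M` is the vertex set of `P`. -/
def prismSet (n : ℕ) (M : Set (EuclideanSpace ℝ (Fin n))) (c : ℝ) :
    Set (WithLp 2 (EuclideanSpace ℝ (Fin n) × ℝ)) :=
  {P | (WithLp.equiv 2 (EuclideanSpace ℝ (Fin n) × ℝ) P).1 ∈ M ∧
       ((WithLp.equiv 2 (EuclideanSpace ℝ (Fin n) × ℝ) P).2 = 0 ∨
        (WithLp.equiv 2 (EuclideanSpace ℝ (Fin n) × ℝ) P).2 = c)}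

noncomputable def pr1 {n : ℕ} (P : WithLp 2 (EuclideanSpace ℝ (Fin n) × ℝ)) :
    EuclideanSpace ℝ (Fin n) :=
  (WithLp.equiv 2 (EuclideanSpace ℝ (Fin n) × ℝ) P).1

noncomputable def pr2 {n : ℕ} (P : WithLp 2 (EuclideanSpace ℝ (Fin n) × ℝ)) : ℝ :=
  (WithLp.equiv 2 (EuclideanSpace ℝ (Fin n) × ℝ) P).2

noncomputable def mkw {n : ℕ} (x : EuclideanSpace ℝ (Fin n)) (t : ℝ) :
    WithLp 2 (EuclideanSpace ℝ (Fin n) × ℝ) :=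
  (WithLp.equiv 2 (EuclideanSpace ℝ (Fin n) × ℝ)).symm (x, t)

variable {n : ℕ} {M : Set (EuclideanSpace ℝ (Fin n))} {c : ℝ}

@[simp] lemma pr1_mkw (x : EuclideanSpace ℝ (Fin n)) (t : ℝ) : pr1 (mkw x t) = x := rfl
@[simp] lemma pr2_mkw (x : EuclideanSpace ℝ (Fin n)) (t : ℝ) : pr2 (mkw x t) = t := rfl

lemma mem_prismSet {P : WithLp 2 (EuclideanSpace ℝ (Fin n) × ℝ)} :
    P ∈ prismSet n M c ↔ pr1 P ∈ M ∧ (pr2 P = 0 ∨ pr2 P = c) := Iff.rfl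

lemma prism_ext {p q : WithLp 2 (EuclideanSpace ℝ (Fin n) × ℝ)}
    (h1 : pr1 p = pr1 q) (h2 : pr2 p = pr2 q) : p = q := (WithLp.equiv 2 _).injective (Prod.ext h1 h2)

lemma dist_sq_prism (p q : WithLp 2 (EuclideanSpace ℝ (Fin n) × ℝ)) :
    dist p q ^ 2 = dist (pr1 p) (pr1 q) ^ 2 + dist (pr2 p) (pr2 q) ^ 2 := by
  rw [WithLp.prod_dist_eq_of_L2, Real.sq_sqrt (by positivity)]; rfl

noncomputable def pmap (e : ↥M ≃ᵢ ↥M) (σ : ℝ → ℝ)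
    (hmem : ∀ t, (t = 0 ∨ t = c) → (σ t = 0 ∨ σ t = c))
    (p : ↥(prismSet n M c)) : ↥(prismSet n M c) :=
  ⟨mkw (e ⟨pr1 p.val, p.2.1⟩) (σ (pr2 p.val)),
   mem_prismSet.mpr ⟨(e ⟨pr1 p.val, p.2.1⟩).2, by
     rw [pr2_mkw]; exact hmem _ (mem_prismSet.mp p.2).2⟩⟩

@[simp] lemma pr1_pmap (e : ↥M ≃ᵢ ↥M) (σ : ℝ → ℝ)
    (hmem : ∀ t, (t = 0 ∨ t = c) → (σ t = 0 ∨ σ t = c)) (p : ↥(prismSet n M c)) :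
    pr1 (pmap e σ hmem p).val = (e ⟨pr1 p.val, p.2.1⟩ : EuclideanSpace ℝ (Fin n)) := rfl

@[simp] lemma pr2_pmap (e : ↥M ≃ᵢ ↥M) (σ : ℝ → ℝ)
    (hmem : ∀ t, (t = 0 ∨ t = c) → (σ t = 0 ∨ σ t = c)) (p : ↥(prismSet n M c)) :
    pr2 (pmap e σ hmem p).val = σ (pr2 p.val) := rfl

noncomputable def pequiv (e : ↥M ≃ᵢ ↥M) (σ : ℝ → ℝ) (hinv : ∀ t, σ (σ t) = t)
    (hd : ∀ s t, dist (σ s) (σ t) = dist s t)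
    (hmem : ∀ t, (t = 0 ∨ t = c) → (σ t = 0 ∨ σ t = c)) :
    ↥(prismSet n M c) ≃ᵢ ↥(prismSet n M c) :=
{ toFun := pmap e σ hmem
  invFun := pmap e.symm σ hmem
  left_inv := fun p => by
    apply Subtype.ext
    apply prism_ext
    · have h1 : (⟨pr1 (pmap e σ hmem p).val, (pmap e σ hmem p).2.1⟩ : ↥M)
          = e ⟨pr1 p.val, p.2.1⟩ := Subtype.ext rfl
      show (e.symm ⟨pr1 (pmap e σ hmem p).val, (pmap e σ hmem p).2.1⟩ :
        EuclideanSpace ℝ (Fin n)) = pr1 p.val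
      rw [h1, IsometryEquiv.symm_apply_apply]
    · show σ (σ (pr2 p.val)) = pr2 p.val
      exact hinv _
  right_inv := fun p => by
    apply Subtype.ext
    apply prism_ext
    · have h1 : (⟨pr1 (pmap e.symm σ hmem p).val, (pmap e.symm σ hmem p).2.1⟩ : ↥M)
          = e.symm ⟨pr1 p.val, p.2.1⟩ := Subtype.ext rfl
      show (e ⟨pr1 (pmap e.symm σ hmem p).val, (pmap e.symm σ hmem p).2.1⟩ :
        EuclideanSpace ℝ (Fin n)) = pr1 p.val
      rw [h1, IsometryEquiv.apply_symm_apply]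
    · show σ (σ (pr2 p.val)) = pr2 p.val
      exact hinv _
  isometry_toFun := Isometry.of_dist_eq fun p q => by
    have h2 : dist (pmap e σ hmem p).val (pmap e σ hmem q).val ^ 2
        = dist p.val q.val ^ 2 := by
      rw [dist_sq_prism, dist_sq_prism, pr1_pmap, pr1_pmap, pr2_pmap, pr2_pmap, hd]
      congr 1
      have : dist (↑(e ⟨pr1 p.val, p.2.1⟩) : EuclideanSpace ℝ (Fin n))
          (↑(e ⟨pr1 q.val, q.2.1⟩)) = dist (pr1 p.val) (pr1 q.val) := by
        calc dist (↑(e ⟨pr1 p.val, p.2.1⟩) : EuclideanSpace ℝ (Fin n)) (↑(e ⟨pr1 q.val, q.2.1⟩))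
            = dist (e ⟨pr1 p.val, p.2.1⟩) (e ⟨pr1 q.val, q.2.1⟩) := rfl
          _ = dist (⟨pr1 p.val, p.2.1⟩ : ↥M) ⟨pr1 q.val, q.2.1⟩ := e.dist_eq _ _
          _ = dist (pr1 p.val) (pr1 q.val) := rfl
      rw [this]
    calc dist (pmap e σ hmem p) (pmap e σ hmem q)
        = dist (pmap e σ hmem p).val (pmap e σ hmem q).val := rfl
      _ = Real.sqrt (dist (pmap e σ hmem p).val (pmap e σ hmem q).val ^ 2) :=
          (Real.sqrt_sq dist_nonneg).symm
      _ = Real.sqrt (dist p.val q.val ^ 2) := by rw [h2]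
      _ = dist p.val q.val := Real.sqrt_sq dist_nonneg
      _ = dist p q := rfl }

lemma aux_arith {dA dB x y c : ℝ} (k1 : dA ^ 2 + x = dB ^ 2 + y)
    (hx : x = 0 ∨ x = c ^ 2) (hy : y = 0 ∨ y = c ^ 2) (hne : x ≠ y) :
    c ^ 2 = |dA ^ 2 - dB ^ 2| := by
  rcases hx with rfl | rfl <;> rcases hy with rfl | rfl <;>
    first
      | exact absurd rfl hne
      | rw [show dA ^ 2 - dB ^ 2 = c ^ 2 by linarith, abs_of_nonneg (sq_nonneg c)]
      | rw [show dA ^ 2 - dB ^ 2 = -(c ^ 2) by linarith, abs_neg, abs_of_nonneg (sq_nonneg c)]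

lemma aux_sq {s t c : ℝ} (hs : s = 0 ∨ s = c) (ht : t = 0 ∨ t = c) :
    (s - t) ^ 2 = 0 ∨ (s - t) ^ 2 = c ^ 2 := by
  rcases hs with rfl | rfl <;> rcases ht with rfl | rfl
  · left; ring
  · right; ring
  · right; ring
  · left; ring

/-- if the vertex set `M` of a polytope in `ℝⁿ` is `m`-point homogeneous
(`m ≥ 1`) and the prism `P × [0,c]` is rigidly two-layered (`c² ∉ D(P)`), then the vertex
set of the prism is `m`-point homogeneous. -/
theorem stmt_14 (n m : ℕ) (hm : 1 ≤ m)
    (M : Set (EuclideanSpace ℝ (Fin n))) (hfin : M.Finite)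
    (hmph : mPointHomogeneous M m) (c : ℝ) (hc : 0 < c)
    (hrig : ¬ ∃ x ∈ M, ∃ y ∈ M, ∃ z ∈ M, ∃ w ∈ M,
        c ^ 2 = |dist x y ^ 2 - dist z w ^ 2|) :
    mPointHomogeneous (prismSet n M c) m := by
  intro A B hAB
  set i0 : Fin m := ⟨0, hm⟩ with hi0
  set a : Fin m → ↥M := fun i => ⟨pr1 (A i).val, (A i).2.1⟩ with ha
  set b : Fin m → ↥M := fun i => ⟨pr1 (B i).val, (B i).2.1⟩ with hb
  set h : Fin m → ℝ := fun i => pr2 (A i).val with hh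
  set k : Fin m → ℝ := fun i => pr2 (B i).val with hk
  have hA2 : ∀ i, h i = 0 ∨ h i = c := fun i => (A i).2.2
  have hB2 : ∀ i, k i = 0 ∨ k i = c := fun i => (B i).2.2
  have key : ∀ i j,
      dist (a i) (a j) ^ 2 + (h i - h j) ^ 2 = dist (b i) (b j) ^ 2 + (k i - k j) ^ 2 := by
    intro i j
    have h1 : dist (A i).val (A j).val ^ 2 = dist (B i).val (B j).val ^ 2 := by
      rw [show dist (A i).val (A j).val = dist (B i).val (B j).val from hAB i j]
    rw [dist_sq_prism, dist_sq_prism] at h1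
    have e2 : dist (pr2 (A i).val) (pr2 (A j).val) ^ 2 = (h i - h j) ^ 2 := by
      rw [Real.dist_eq, sq_abs]
    have e3 : dist (pr2 (B i).val) (pr2 (B j).val) ^ 2 = (k i - k j) ^ 2 := by
      rw [Real.dist_eq, sq_abs]
    rw [e2, e3] at h1
    exact h1
  have hsq : ∀ i j, (h i - h j) ^ 2 = (k i - k j) ^ 2 := by
    intro i j
    by_contra hne
    exact hrig ⟨(a i).val, (a i).2, (a j).val, (a j).2, (b i).val, (b i).2, (b j).val, (b j).2,
      aux_arith (key i j) (aux_sq (hA2 i) (hA2 j)) (aux_sq (hB2 i) (hB2 j)) hne⟩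
  have hda : ∀ i j, dist (a i) (a j) = dist (b i) (b j) := by
    intro i j
    have h3 : dist (a i) (a j) ^ 2 = dist (b i) (b j) ^ 2 := by
      have := key i j; have := hsq i j; linarith
    rw [← Real.sqrt_sq (dist_nonneg (x := a i) (y := a j)), h3,
      Real.sqrt_sq dist_nonneg]
  obtain ⟨e, he⟩ := hmph a b hda
  by_cases heq : h i0 = k i0
  · -- same layers: use the identity on the height coordinate
    have hall : ∀ i, k i = h i := by
      intro i
      have e1 := hsq i i0
      rw [← heq] at e1
      rcases hA2 i with h1 | h1 <;> rcases hB2 i with h2 | h2 <;>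
          rcases hA2 i0 with h3 | h3 <;> rw [h1, h3] at e1 <;> rw [h1, h2] <;>
          rw [h2] at e1 <;>
        first
          | rfl
          | (exfalso; nlinarith [hc])
    refine ⟨pequiv e id (fun t => rfl) (fun s t => rfl) (fun t ht => ht), fun i => ?_⟩
    apply Subtype.ext
    apply prism_ext
    · show (e ⟨pr1 (A i).val, (A i).2.1⟩ : EuclideanSpace ℝ (Fin n)) = pr1 (B i).val
      exact congrArg Subtype.val (he i)
    · show id (pr2 (A i).val) = pr2 (B i).val
      exact (hall i).symm
  · -- opposite layers: reflect the height coordinate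
    have hall : ∀ i, k i = c - h i := by
      intro i
      have e1 := hsq i i0
      rcases hA2 i with h1 | h1 <;> rcases hB2 i with h2 | h2 <;>
          rcases hA2 i0 with h3 | h3 <;> rcases hB2 i0 with h4 | h4 <;>
          rw [h3, h4] at heq <;> rw [h1, h3, h2, h4] at e1 <;> rw [h1, h2] <;>
        first
          | exact absurd rfl heq
          | (exfalso; nlinarith [e1, hc, mul_pos hc hc])
          | norm_num
    have hmem : ∀ t : ℝ, (t = 0 ∨ t = c) → ((c - t) = 0 ∨ (c - t) = c) := by
      rintro t (rfl | rfl) <;> simp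
    refine ⟨pequiv e (fun t => c - t) (fun t => by ring)
      (fun s t => by rw [Real.dist_eq, Real.dist_eq]; rw [show c - s - (c - t) = -(s - t) by ring, abs_neg])
      hmem, fun i => ?_⟩
    apply Subtype.ext
    apply prism_ext
    · show (e ⟨pr1 (A i).val, (A i).2.1⟩ : EuclideanSpace ℝ (Fin n)) = pr1 (B i).val
      exact congrArg Subtype.val (he i)
    · show c - pr2 (A i).val = pr2 (B i).val
      exact (hall i).symm
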